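/- arXiv:2106.05336 — 3 statements merged into one kernel-verified Lean document; each statement's English description precedes it below -/
import Mathlib

section
/- In type C_n (n ≥ 3), where the simple roots are α_i = −ω_{i−1} + 2ω_i − ω_{i+1} for 1 ≤ i ≤ n−1 and α_n = −2ω_{n−1} + 2ω_n, the level sets satisfy: Λ₁ = {0, ω_1}, Λ₂ = {ω_2, ω_3}, and the set of radical weights lying in Λ₃ equals {2ω_1} if n = 3 and {2ω_1, ω_4} if n ≥ 4. -/
namespace WeightLevelsCn

/-- The simple roots of `C_n` written in the basis of fundamental dominant weights:
`α_i = -ω_{i-1} + 2ω_i - ω_{i+1}` for `i ≤ n-1` and `α_n = -2ω_{n-1} + 2ω_n`,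
with `0`-based indexing. -/
def alpha (n : ℕ) (i : Fin n) : Fin n → ℤ := fun j =>
  if j = i then 2
  else if (i : ℕ) = n - 1 ∧ (j : ℕ) + 1 = (i : ℕ) then -2
  else if (j : ℕ) + 1 = (i : ℕ) ∨ (i : ℕ) + 1 = (j : ℕ) then -1
  else 0

/-- A weight is dominant if all its coordinates (in the fundamental weight basis) are `≥ 0`. -/
def dominant (n : ℕ) (l : Fin n → ℤ) : Prop := ∀ i, 0 ≤ l i

/-- `prec n μ λ` means `μ ≺ λ`: `μ ≠ λ` and `λ - μ` is an `ℕ`-linear combination of the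
simple roots. -/
def prec (n : ℕ) (μ l : Fin n → ℤ) : Prop :=
  μ ≠ l ∧ ∃ c : Fin n → ℕ, l = μ + ∑ i, (c i : ℤ) • alpha n i

/-- A weight is radical if it is a `ℤ`-linear combination of the simple roots. -/
def radical (n : ℕ) (l : Fin n → ℤ) : Prop :=
  ∃ c : Fin n → ℤ, l = ∑ i, c i • alpha n i

/-- `cum n i` is the union `Λ₁ ∪ ⋯ ∪ Λ_i` of the first `i` level sets. -/
def cum (n : ℕ) : ℕ → Set (Fin n → ℤ)
  | 0 => ∅
  | i + 1 => cum n i ∪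
      {l | dominant n l ∧ l ∉ cum n i ∧ ∀ ν, dominant n ν → prec n ν l → ν ∈ cum n i}

/-- `level n i` is the set `Λ_i` of weights of level `i` (for `i ≥ 1`). -/
def level (n : ℕ) (i : ℕ) : Set (Fin n → ℤ) :=
  {l | dominant n l ∧ l ∉ cum n (i - 1) ∧ ∀ ν, dominant n ν → prec n ν l → ν ∈ cum n (i - 1)}

/-- weighted functional: `Cf n t d = ∑ k min(t,k+1) d_k`. -/
def Cf (n t : ℕ) (d : Fin n → ℤ) : ℤ := ∑ k : Fin n, (min (t : ℤ) ((k : ℕ) + 1)) * d k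

lemma Cf_zero_t (n : ℕ) (d : Fin n → ℤ) : Cf n 0 d = 0 := by
  refine Finset.sum_eq_zero fun k _ => ?_
  have : (0:ℤ) ≤ ((k:ℕ):ℤ) := Int.natCast_nonneg _
  have : min ((0:ℕ):ℤ) (((k:ℕ):ℤ) + 1) = 0 := by push_cast; omega
  rw [this, zero_mul]

lemma Cf_zero (n t : ℕ) : Cf n t (0 : Fin n → ℤ) = 0 := by
  simp [Cf]

lemma Cf_single (n t : ℕ) (i : Fin n) (a : ℤ) :
    Cf n t (Pi.single i a) = min (t : ℤ) ((i : ℕ) + 1) * a := by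
  unfold Cf
  rw [Finset.sum_eq_single i]
  · simp
  · intro b _ hb; simp [Pi.single_apply, hb]
  · simp

lemma Cf_add (n t : ℕ) (d e : Fin n → ℤ) : Cf n t (d + e) = Cf n t d + Cf n t e := by
  simp [Cf, mul_add, Finset.sum_add_distrib]

lemma Cf_sub (n t : ℕ) (d e : Fin n → ℤ) : Cf n t (d - e) = Cf n t d - Cf n t e := by
  simp [Cf, mul_sub, Finset.sum_sub_distrib]

lemma Cf_one (n : ℕ) (d : Fin n → ℤ) : Cf n 1 d = ∑ k, d k := by
  unfold Cf
  refine Finset.sum_congr rfl fun k _ => ?_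
  have h0 : (0:ℤ) ≤ ((k:ℕ):ℤ) := Int.natCast_nonneg _
  have : min ((1:ℕ):ℤ) (((k:ℕ):ℤ) + 1) = 1 := by push_cast; omega
  rw [this, one_mul]

lemma Cf_top (n t : ℕ) (hnt : n ≤ t) (d : Fin n → ℤ) : Cf n t d = Cf n n d := by
  unfold Cf
  refine Finset.sum_congr rfl fun k _ => ?_
  have hk := k.isLt
  have h1 : ((k:ℕ):ℤ) + 1 ≤ (n:ℤ) := by exact_mod_cast hk
  have h2 : (n:ℤ) ≤ (t:ℤ) := by exact_mod_cast hnt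
  congr 1
  omega

lemma Cf_nonneg (n t : ℕ) (d : Fin n → ℤ) (hd : dominant n d) : 0 ≤ Cf n t d := by
  refine Finset.sum_nonneg fun k _ => mul_nonneg ?_ (hd k)
  have : (0:ℤ) ≤ ((k:ℕ):ℤ) := Int.natCast_nonneg _
  omega

lemma Cf_mono (n : ℕ) {t t' : ℕ} (h : t ≤ t') (d : Fin n → ℤ) (hd : dominant n d) :
    Cf n t d ≤ Cf n t' d := by
  refine Finset.sum_le_sum fun k _ => mul_le_mul_of_nonneg_right ?_ (hd k)
  have : (t:ℤ) ≤ (t':ℤ) := by exact_mod_cast h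
  omega

lemma Cf_single_le (n t : ℕ) (d : Fin n → ℤ) (hd : dominant n d) (k : Fin n) :
    min (t : ℤ) ((k : ℕ) + 1) * d k ≤ Cf n t d := by
  refine Finset.single_le_sum (fun j _ => mul_nonneg ?_ (hd j)) (Finset.mem_univ k)
  have : (0:ℤ) ≤ ((j:ℕ):ℤ) := Int.natCast_nonneg _
  omega

lemma Cf_min_le (n t : ℕ) (d : Fin n → ℤ) (hd : dominant n d) :
    min (t : ℤ) (Cf n n d) ≤ Cf n t d := by
  by_cases h : ∃ k : Fin n, 1 ≤ d k ∧ t ≤ (k : ℕ) + 1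
  · obtain ⟨k, hk1, hk2⟩ := h
    have hmin : min (t : ℤ) ((k:ℕ) + 1) = t := by
      have : (t:ℤ) ≤ ((k:ℕ):ℤ) + 1 := by exact_mod_cast hk2
      omega
    have := Cf_single_le n t d hd k
    rw [hmin] at this
    have : (t:ℤ) ≤ Cf n t d := le_trans (by nlinarith) this
    omega
  · push_neg at h
    have : Cf n t d = Cf n n d := by
      unfold Cf
      refine Finset.sum_congr rfl fun k _ => ?_
      by_cases hk : 1 ≤ d k
      · have hkt := h k hk
        have hkn := k.isLt
        have h1 : ((k:ℕ):ℤ) + 1 ≤ (n:ℤ) := by exact_mod_cast hkn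
        have h2 : ((k:ℕ):ℤ) + 1 < (t:ℤ) := by exact_mod_cast hkt
        congr 1; omega
      · have : d k = 0 := le_antisymm (by omega) (hd k)
        rw [this, mul_zero, mul_zero]
    omega

lemma eq_zero_of_Cf_top_nonpos (n : ℕ) (d : Fin n → ℤ) (hd : dominant n d)
    (h : Cf n n d ≤ 0) : d = 0 := by
  have h0 : Cf n n d = 0 := le_antisymm h (Cf_nonneg n n d hd)
  have hnn : ∀ k ∈ (Finset.univ : Finset (Fin n)),
      0 ≤ (min ((n:ℕ):ℤ) (((k:ℕ):ℤ) + 1)) * d k := by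
    intro k _
    refine mul_nonneg ?_ (hd k)
    have : (0:ℤ) ≤ ((k:ℕ):ℤ) := Int.natCast_nonneg _
    omega
  have hz := (Finset.sum_eq_zero_iff_of_nonneg hnn).mp h0
  funext k
  have hk := hz k (Finset.mem_univ k)
  have hkn := k.isLt
  have h1 : (0:ℤ) ≤ ((k:ℕ):ℤ) := Int.natCast_nonneg _
  have h2 : (1:ℤ) ≤ (n:ℤ) := by exact_mod_cast Nat.one_le_iff_ne_zero.mpr (by omega)
  have hmpos : 0 < min ((n:ℕ):ℤ) ((k:ℕ) + 1) := by omega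
  have := mul_eq_zero.mp hk
  simp only [Pi.zero_apply]
  omega


lemma classify_two (n : ℕ) (ν : Fin n → ℤ) (hd : dominant n ν) (h : ∑ k, ν k ≤ 2) :
    ν = 0 ∨ (∃ m, ν = Pi.single m 1) ∨ (∃ m, ν = Pi.single m 2) ∨
      (∃ m k, m ≠ k ∧ ν = Pi.single m 1 + Pi.single k 1) := by
  by_cases hz : ν = 0
  · exact Or.inl hz
  obtain ⟨m, hm⟩ := Function.ne_iff.mp hz
  simp only [Pi.zero_apply] at hm
  have hm1 : 1 ≤ ν m := by have := hd m; omega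
  have hs : ν m + ∑ k ∈ Finset.univ.erase m, ν k = ∑ k, ν k :=
    Finset.add_sum_erase _ _ (Finset.mem_univ m)
  have hr0 : 0 ≤ ∑ k ∈ Finset.univ.erase m, ν k :=
    Finset.sum_nonneg fun k _ => hd k
  by_cases hrz : ∀ k ∈ Finset.univ.erase m, ν k = 0
  · have hr : ∑ k ∈ Finset.univ.erase m, ν k = 0 := Finset.sum_eq_zero hrz
    have hmv : ν m ≤ 2 := by omega
    have hform : ν = Pi.single m (ν m) := by
      funext j
      rcases eq_or_ne j m with rfl | hjm
      · simp
      · rw [Pi.single_apply, if_neg hjm]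
        exact hrz j (Finset.mem_erase.mpr ⟨hjm, Finset.mem_univ j⟩)
    have hv : ν m = 1 ∨ ν m = 2 := by omega
    rcases hv with hv | hv
    · exact Or.inr (Or.inl ⟨m, by rw [hform, hv]⟩)
    · exact Or.inr (Or.inr (Or.inl ⟨m, by rw [hform, hv]⟩))
  · push_neg at hrz
    obtain ⟨k, hk, hknz⟩ := hrz
    have hkm : k ≠ m := (Finset.mem_erase.mp hk).1
    have hk1 : 1 ≤ ν k := by have := hd k; omega
    have hs2 : ν k + ∑ j ∈ (Finset.univ.erase m).erase k, ν j
        = ∑ j ∈ Finset.univ.erase m, ν j := Finset.add_sum_erase _ _ hk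
    have hr20 : 0 ≤ ∑ j ∈ (Finset.univ.erase m).erase k, ν j :=
      Finset.sum_nonneg fun j _ => hd j
    have hm1' : ν m = 1 := by omega
    have hk1' : ν k = 1 := by omega
    have hr2 : ∑ j ∈ (Finset.univ.erase m).erase k, ν j = 0 := by omega
    have hallz := (Finset.sum_eq_zero_iff_of_nonneg (fun j _ => hd j)).mp hr2
    refine Or.inr (Or.inr (Or.inr ⟨m, k, fun hh => hkm hh.symm, ?_⟩))
    funext j
    rcases eq_or_ne j m with rfl | hjm
    · simp [Pi.single_apply, hkm, hm1', Ne.symm hkm]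
    · rcases eq_or_ne j k with rfl | hjk
      · simp [Pi.single_apply, hjm, hk1']
      · have : ν j = 0 := hallz j (by
          exact Finset.mem_erase.mpr ⟨hjk, Finset.mem_erase.mpr ⟨hjm, Finset.mem_univ j⟩⟩)
        simp [Pi.single_apply, hjm, hjk, this]

lemma classify_one (n : ℕ) (ν : Fin n → ℤ) (hd : dominant n ν) (h : ∑ k, ν k ≤ 1) :
    ν = 0 ∨ (∃ m, ν = Pi.single m 1) := by
  rcases classify_two n ν hd (by omega) with h0 | h1 | h2 | h3
  · exact Or.inl h0
  · exact Or.inr h1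
  · obtain ⟨m, rfl⟩ := h2
    exfalso
    have : ∑ k, Pi.single m (2:ℤ) k = 2 := by
      simp [Finset.sum_pi_single']
    omega
  · obtain ⟨m, k, hmk, rfl⟩ := h3
    exfalso
    have h1 : ∑ j, ((Pi.single m (1:ℤ) + Pi.single k (1:ℤ)) : Fin n → ℤ) j
        = ∑ j, Pi.single m (1:ℤ) j + ∑ j, Pi.single k (1:ℤ) j := by
      simp [Finset.sum_add_distrib]
    have h2 : ∑ j, Pi.single m (1:ℤ) j = 1 := by simp [Finset.sum_pi_single']
    have h3 : ∑ j, Pi.single k (1:ℤ) j = 1 := by simp [Finset.sum_pi_single']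
    omega


lemma alpha_mk (n : ℕ) (i : Fin n) (m : ℕ) (hm : m < n) :
    alpha n i ⟨m, hm⟩ =
      (if m = (i:ℕ) then 2 else if (i:ℕ) = n - 1 ∧ m + 1 = (i:ℕ) then -2
        else if m + 1 = (i:ℕ) ∨ (i:ℕ) + 1 = m then -1 else 0) := by
  simp [alpha, Fin.ext_iff]

lemma Cf_eq_range (n t : ℕ) (d : Fin n → ℤ) :
    Cf n t d = ∑ m ∈ Finset.range n,
      (min (t:ℤ) ((m:ℤ) + 1)) * (if h : m < n then d ⟨m, h⟩ else 0) := by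
  rw [← Fin.sum_univ_eq_sum_range (fun m => (min (t:ℤ) ((m:ℤ) + 1)) *
    (if h : m < n then d ⟨m, h⟩ else 0)) n]
  refine Finset.sum_congr rfl fun k _ => ?_
  simp [k.isLt]

lemma Cf_alpha (n t : ℕ) (hn : 3 ≤ n) (i : Fin n) :
    Cf n t (alpha n i) =
      if (i:ℕ) = n - 1 then (if n ≤ t then 2 else 0)
      else if t = (i:ℕ) + 1 then 1 else 0 := by
  rw [Cf_eq_range]
  by_cases hi : (i:ℕ) = n - 1
  · have hstep : ∀ m ∈ Finset.range n,
        (min (t:ℤ) ((m:ℤ) + 1)) * (if h : m < n then alpha n i ⟨m, h⟩ else 0) =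
        (if m = n-1 then 2 * min (t:ℤ) ((m:ℤ) + 1) else 0) +
        (if m = n-2 then -2 * min (t:ℤ) ((m:ℤ) + 1) else 0) := by
      intro m hm
      rw [Finset.mem_range] at hm
      rw [dif_pos hm, alpha_mk]
      have hi2 := i.isLt
      split_ifs <;> omega
    rw [Finset.sum_congr rfl hstep, Finset.sum_add_distrib,
      Finset.sum_ite_eq' (Finset.range n) (n-1), Finset.sum_ite_eq' (Finset.range n) (n-2),
      if_pos (Finset.mem_range.mpr (by omega)), if_pos (Finset.mem_range.mpr (by omega)),
      if_pos hi]
    split_ifs <;> omega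
  · by_cases hi0 : (i:ℕ) = 0
    · have hstep : ∀ m ∈ Finset.range n,
          (min (t:ℤ) ((m:ℤ) + 1)) * (if h : m < n then alpha n i ⟨m, h⟩ else 0) =
          (if m = 0 then 2 * min (t:ℤ) ((m:ℤ) + 1) else 0) +
          (if m = 1 then -1 * min (t:ℤ) ((m:ℤ) + 1) else 0) := by
        intro m hm
        rw [Finset.mem_range] at hm
        rw [dif_pos hm, alpha_mk]
        split_ifs <;> omega
      rw [Finset.sum_congr rfl hstep, Finset.sum_add_distrib,
        Finset.sum_ite_eq' (Finset.range n) 0, Finset.sum_ite_eq' (Finset.range n) 1,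
        if_pos (Finset.mem_range.mpr (by omega)), if_pos (Finset.mem_range.mpr (by omega)),
        if_neg hi]
      rw [hi0]
      split_ifs <;> omega
    · have hi2 := i.isLt
      have hstep : ∀ m ∈ Finset.range n,
          (min (t:ℤ) ((m:ℤ) + 1)) * (if h : m < n then alpha n i ⟨m, h⟩ else 0) =
          (if m = (i:ℕ) then 2 * min (t:ℤ) ((m:ℤ) + 1) else 0) +
          ((if m = (i:ℕ) - 1 then -1 * min (t:ℤ) ((m:ℤ) + 1) else 0) +
           (if m = (i:ℕ) + 1 then -1 * min (t:ℤ) ((m:ℤ) + 1) else 0)) := by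
        intro m hm
        rw [Finset.mem_range] at hm
        rw [dif_pos hm, alpha_mk]
        split_ifs <;> omega
      rw [Finset.sum_congr rfl hstep, Finset.sum_add_distrib, Finset.sum_add_distrib,
        Finset.sum_ite_eq' (Finset.range n) ((i:ℕ)),
        Finset.sum_ite_eq' (Finset.range n) ((i:ℕ) - 1),
        Finset.sum_ite_eq' (Finset.range n) ((i:ℕ) + 1),
        if_pos (Finset.mem_range.mpr (by omega)), if_pos (Finset.mem_range.mpr (by omega)),
        if_pos (Finset.mem_range.mpr (by omega)), if_neg hi]
      split_ifs <;> omega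


lemma Cf_sum {ι : Type*} (n t : ℕ) (s : Finset ι) (f : ι → Fin n → ℤ) :
    Cf n t (∑ i ∈ s, f i) = ∑ i ∈ s, Cf n t (f i) := by
  unfold Cf
  rw [Finset.sum_comm]
  refine Finset.sum_congr rfl fun k _ => ?_
  rw [Finset.sum_apply, Finset.mul_sum]

lemma Cf_smul (n t : ℕ) (z : ℤ) (d : Fin n → ℤ) : Cf n t (z • d) = z * Cf n t d := by
  unfold Cf
  rw [Finset.mul_sum]
  refine Finset.sum_congr rfl fun k _ => ?_
  simp [Pi.smul_apply]
  ring

lemma Cf_sumsmul (n t : ℕ) (hn : 3 ≤ n) (c : Fin n → ℤ) :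
    Cf n t (∑ i, c i • alpha n i) =
      if hnt : n ≤ t then 2 * c ⟨n-1, by omega⟩
      else if ht : 1 ≤ t then c ⟨t-1, by omega⟩ else 0 := by
  rw [Cf_sum]
  have hstep : ∀ i : Fin n, Cf n t (c i • alpha n i) =
      (if h : (i:ℕ) < n then c ⟨(i:ℕ), h⟩ else 0) *
      (if (i:ℕ) = n-1 then (if n ≤ t then 2 else 0) else if t = (i:ℕ)+1 then 1 else 0) := by
    intro i
    rw [Cf_smul, Cf_alpha n t hn i, dif_pos i.isLt]
  rw [Finset.sum_congr rfl fun i _ => hstep i,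
    Fin.sum_univ_eq_sum_range (fun m =>
    (if h : m < n then c ⟨m, h⟩ else 0) *
    (if m = n-1 then (if n ≤ t then 2 else 0) else if t = m+1 then 1 else 0)) n]
  by_cases hnt : n ≤ t
  · rw [dif_pos hnt]
    have hstep2 : ∀ m ∈ Finset.range n,
        (if h : m < n then c ⟨m, h⟩ else 0) *
        (if m = n-1 then (if n ≤ t then 2 else 0) else if t = m+1 then 1 else 0) =
        (if m = n-1 then 2 * (if h : m < n then c ⟨m, h⟩ else 0) else 0) := by
      intro m hm
      rw [Finset.mem_range] at hm
      split_ifs <;> first | omega | ring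
    rw [Finset.sum_congr rfl hstep2, Finset.sum_ite_eq' (Finset.range n) (n-1),
      if_pos (Finset.mem_range.mpr (by omega)), dif_pos (by omega : n-1 < n)]
  · rw [dif_neg hnt]
    by_cases ht : 1 ≤ t
    · rw [dif_pos ht]
      have hstep2 : ∀ m ∈ Finset.range n,
          (if h : m < n then c ⟨m, h⟩ else 0) *
          (if m = n-1 then (if n ≤ t then 2 else 0) else if t = m+1 then 1 else 0) =
          (if m = t-1 then (if h : m < n then c ⟨m, h⟩ else 0) else 0) := by
        intro m hm
        rw [Finset.mem_range] at hm
        split_ifs <;> first | omega | ring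
      rw [Finset.sum_congr rfl hstep2, Finset.sum_ite_eq' (Finset.range n) (t-1),
        if_pos (Finset.mem_range.mpr (by omega)), dif_pos (by omega : t-1 < n)]
    · rw [dif_neg ht]
      refine Finset.sum_eq_zero fun m hm => ?_
      rw [Finset.mem_range] at hm
      split_ifs <;> first | omega | ring

lemma alpha_apply (n : ℕ) (m : ℕ) (hm : m < n) (k : Fin n) :
    alpha n ⟨m, hm⟩ k =
      (if (k:ℕ) = m then 2 else if m = n-1 ∧ (k:ℕ)+1 = m then -2
        else if (k:ℕ)+1 = m ∨ m+1 = (k:ℕ) then -1 else 0) := by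
  simp [alpha, Fin.ext_iff]

lemma eval_sumsmul (n : ℕ) (hn : 3 ≤ n) (c : Fin n → ℤ) (k : Fin n) :
    (∑ i, c i • alpha n i) k =
      2 * c k - (if h : 1 ≤ (k:ℕ) then c ⟨(k:ℕ)-1, by omega⟩ else 0)
        - (if h : (k:ℕ)+1 < n then (if (k:ℕ)+2 = n then 2 else 1) * c ⟨(k:ℕ)+1, h⟩ else 0) := by
  have h1 : (∑ i, c i • alpha n i) k = ∑ i : Fin n, c i * alpha n i k := by
    rw [Finset.sum_apply]
    exact Finset.sum_congr rfl fun i _ => by simp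
  have hstep : ∀ i : Fin n, c i * alpha n i k =
      (if h : (i:ℕ) < n then c ⟨(i:ℕ), h⟩ else 0) *
      (if h : (i:ℕ) < n then alpha n ⟨(i:ℕ), h⟩ k else 0) := by
    intro i
    rw [dif_pos i.isLt, dif_pos i.isLt]
  rw [h1, Finset.sum_congr rfl fun i _ => hstep i,
    Fin.sum_univ_eq_sum_range (fun m =>
      (if h : m < n then c ⟨m, h⟩ else 0) *
      (if h : m < n then alpha n ⟨m, h⟩ k else 0)) n]
  have hkn := k.isLt
  by_cases hk0 : 1 ≤ (k:ℕ)
  · have hstep2 : ∀ m ∈ Finset.range n,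
        (if h : m < n then c ⟨m, h⟩ else 0) * (if h : m < n then alpha n ⟨m, h⟩ k else 0) =
        (if m = (k:ℕ) then 2 * (if h : m < n then c ⟨m, h⟩ else 0) else 0) +
        ((if m = (k:ℕ)+1 then
            -((if (k:ℕ)+2 = n then 2 else 1) * (if h : m < n then c ⟨m, h⟩ else 0)) else 0) +
         (if m = (k:ℕ)-1 then -(if h : m < n then c ⟨m, h⟩ else 0) else 0)) := by
      intro m hm
      rw [Finset.mem_range] at hm
      simp only [dif_pos hm]
      rw [alpha_apply]
      split_ifs <;> first | omega | ring
    rw [Finset.sum_congr rfl hstep2, Finset.sum_add_distrib, Finset.sum_add_distrib,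
      Finset.sum_ite_eq' (Finset.range n) ((k:ℕ)),
      Finset.sum_ite_eq' (Finset.range n) ((k:ℕ)+1),
      Finset.sum_ite_eq' (Finset.range n) ((k:ℕ)-1),
      if_pos (show (k:ℕ) ∈ Finset.range n from Finset.mem_range.mpr hkn),
      if_pos (show (k:ℕ)-1 ∈ Finset.range n from Finset.mem_range.mpr (by omega)),
      dif_pos hkn, dif_pos (show (k:ℕ)-1 < n by omega), dif_pos hk0]
    have hek : (⟨(k:ℕ), hkn⟩ : Fin n) = k := by simp
    rw [hek]
    by_cases hk1 : (k:ℕ)+1 < n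
    · rw [if_pos (show (k:ℕ)+1 ∈ Finset.range n from Finset.mem_range.mpr hk1),
        dif_pos hk1, dif_pos hk1]
      ring
    · rw [if_neg (show (k:ℕ)+1 ∉ Finset.range n by simp; omega), dif_neg hk1]
      ring
  · have hk0' : (k:ℕ) = 0 := by omega
    have hstep2 : ∀ m ∈ Finset.range n,
        (if h : m < n then c ⟨m, h⟩ else 0) * (if h : m < n then alpha n ⟨m, h⟩ k else 0) =
        (if m = (k:ℕ) then 2 * (if h : m < n then c ⟨m, h⟩ else 0) else 0) +
        (if m = (k:ℕ)+1 then
            -((if (k:ℕ)+2 = n then 2 else 1) * (if h : m < n then c ⟨m, h⟩ else 0)) else 0) := by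
      intro m hm
      rw [Finset.mem_range] at hm
      simp only [dif_pos hm]
      rw [alpha_apply]
      split_ifs <;> first | omega | ring
    rw [Finset.sum_congr rfl hstep2, Finset.sum_add_distrib,
      Finset.sum_ite_eq' (Finset.range n) ((k:ℕ)),
      Finset.sum_ite_eq' (Finset.range n) ((k:ℕ)+1),
      if_pos (show (k:ℕ) ∈ Finset.range n from Finset.mem_range.mpr hkn),
      dif_pos hkn, dif_neg hk0]
    have hek : (⟨(k:ℕ), hkn⟩ : Fin n) = k := by simp
    rw [hek]
    by_cases hk1 : (k:ℕ)+1 < n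
    · rw [if_pos (show (k:ℕ)+1 ∈ Finset.range n from Finset.mem_range.mpr hk1),
        dif_pos hk1, dif_pos hk1]
      ring
    · rw [if_neg (show (k:ℕ)+1 ∉ Finset.range n by simp; omega), dif_neg hk1]
      ring


lemma recon_mid (n : ℕ) (d : Fin n → ℤ) (k : Fin n) (hk : (k:ℕ)+1 < n) :
    2 * Cf n ((k:ℕ)+1) d - Cf n (k:ℕ) d - Cf n ((k:ℕ)+2) d = d k := by
  rw [Cf_eq_range, Cf_eq_range, Cf_eq_range, Finset.mul_sum,
    ← Finset.sum_sub_distrib, ← Finset.sum_sub_distrib]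
  have hstep : ∀ m ∈ Finset.range n,
      (2 * ((min (((k:ℕ)+1 : ℕ):ℤ) ((m:ℤ)+1)) * (if h : m < n then d ⟨m, h⟩ else 0)) -
        (min (((k:ℕ) : ℕ):ℤ) ((m:ℤ)+1)) * (if h : m < n then d ⟨m, h⟩ else 0) -
        (min (((k:ℕ)+2 : ℕ):ℤ) ((m:ℤ)+1)) * (if h : m < n then d ⟨m, h⟩ else 0)) =
      (if m = (k:ℕ) then (if h : m < n then d ⟨m, h⟩ else 0) else 0) := by
    intro m hm
    rw [Finset.mem_range] at hm
    have hc : 2 * (min (((k:ℕ)+1 : ℕ):ℤ) ((m:ℤ)+1)) - (min (((k:ℕ) : ℕ):ℤ) ((m:ℤ)+1)) -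
        (min (((k:ℕ)+2 : ℕ):ℤ) ((m:ℤ)+1)) = (if m = (k:ℕ) then 1 else 0) := by
      split_ifs <;> omega
    calc 2 * ((min (((k:ℕ)+1 : ℕ):ℤ) ((m:ℤ)+1)) * (if h : m < n then d ⟨m, h⟩ else 0)) -
        (min (((k:ℕ) : ℕ):ℤ) ((m:ℤ)+1)) * (if h : m < n then d ⟨m, h⟩ else 0) -
        (min (((k:ℕ)+2 : ℕ):ℤ) ((m:ℤ)+1)) * (if h : m < n then d ⟨m, h⟩ else 0)
        = (2 * (min (((k:ℕ)+1 : ℕ):ℤ) ((m:ℤ)+1)) - (min (((k:ℕ) : ℕ):ℤ) ((m:ℤ)+1)) -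
          (min (((k:ℕ)+2 : ℕ):ℤ) ((m:ℤ)+1))) * (if h : m < n then d ⟨m, h⟩ else 0) := by ring
      _ = _ := by rw [hc]; split_ifs <;> ring
  rw [Finset.sum_congr rfl hstep, Finset.sum_ite_eq' (Finset.range n) ((k:ℕ)),
    if_pos (show (k:ℕ) ∈ Finset.range n from Finset.mem_range.mpr k.isLt),
    dif_pos k.isLt]

lemma recon_last (n : ℕ) (d : Fin n → ℤ) (k : Fin n) (hk : (k:ℕ)+1 = n) :
    Cf n n d - Cf n (n-1) d = d k := by
  rw [Cf_eq_range, Cf_eq_range, ← Finset.sum_sub_distrib]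
  have hstep : ∀ m ∈ Finset.range n,
      ((min ((n : ℕ):ℤ) ((m:ℤ)+1)) * (if h : m < n then d ⟨m, h⟩ else 0) -
        (min ((n-1 : ℕ):ℤ) ((m:ℤ)+1)) * (if h : m < n then d ⟨m, h⟩ else 0)) =
      (if m = (k:ℕ) then (if h : m < n then d ⟨m, h⟩ else 0) else 0) := by
    intro m hm
    rw [Finset.mem_range] at hm
    have hc : (min ((n : ℕ):ℤ) ((m:ℤ)+1)) - (min ((n-1 : ℕ):ℤ) ((m:ℤ)+1)) =
        (if m = (k:ℕ) then 1 else 0) := by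
      split_ifs <;> omega
    calc (min ((n : ℕ):ℤ) ((m:ℤ)+1)) * (if h : m < n then d ⟨m, h⟩ else 0) -
        (min ((n-1 : ℕ):ℤ) ((m:ℤ)+1)) * (if h : m < n then d ⟨m, h⟩ else 0)
        = ((min ((n : ℕ):ℤ) ((m:ℤ)+1)) - (min ((n-1 : ℕ):ℤ) ((m:ℤ)+1))) *
          (if h : m < n then d ⟨m, h⟩ else 0) := by ring
      _ = _ := by rw [hc]; split_ifs <;> ring
  rw [Finset.sum_congr rfl hstep, Finset.sum_ite_eq' (Finset.range n) ((k:ℕ)),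
    if_pos (show (k:ℕ) ∈ Finset.range n from Finset.mem_range.mpr k.isLt),
    dif_pos k.isLt]

/-- canonical coefficients -/
def czf (n : ℕ) (d : Fin n → ℤ) : Fin n → ℤ :=
  fun i => if (i:ℕ)+1 = n then Cf n n d / 2 else Cf n ((i:ℕ)+1) d

lemma reconstruct (n : ℕ) (hn : 3 ≤ n) (d : Fin n → ℤ) (h2 : 2 ∣ Cf n n d) :
    d = ∑ i, czf n d i • alpha n i := by
  funext k
  rw [eval_sumsmul n hn (czf n d) k]
  simp only [czf]
  have h22 : 2 * (Cf n n d / 2) = Cf n n d := Int.mul_ediv_cancel' h2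
  by_cases hlast : (k:ℕ)+1 = n
  · rw [if_pos hlast, dif_pos (show 1 ≤ (k:ℕ) by omega),
      if_neg (show ¬((k:ℕ)-1+1 = n) by omega),
      dif_neg (show ¬((k:ℕ)+1 < n) by omega)]
    have e1 : (k:ℕ)-1+1 = n-1 := by omega
    rw [e1]
    have hr := recon_last n d k hlast
    linarith
  · have hklt : (k:ℕ)+1 < n := by have := k.isLt; omega
    have hrm := recon_mid n d k hklt
    have e12 : (k:ℕ)+1+1 = (k:ℕ)+2 := by omega
    rw [if_neg hlast, dif_pos hklt, e12]
    by_cases hk0 : 1 ≤ (k:ℕ)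
    · have e1 : (k:ℕ)-1+1 = (k:ℕ) := by omega
      rw [dif_pos hk0, e1, if_neg (show ¬((k:ℕ) = n) by omega)]
      by_cases hk2 : (k:ℕ)+2 = n
      · rw [if_pos hk2, if_pos hk2]
        rw [hk2] at hrm
        linarith
      · rw [if_neg hk2, if_neg hk2]
        linarith
    · have hk0' : (k:ℕ) = 0 := by omega
      have hz : Cf n ((k:ℕ)) d = 0 := by rw [hk0']; exact Cf_zero_t n d
      rw [dif_neg hk0]
      by_cases hk2 : (k:ℕ)+2 = n
      · rw [if_pos hk2, if_pos hk2]
        rw [hk2] at hrm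
        linarith
      · rw [if_neg hk2, if_neg hk2]
        linarith

lemma exists_c_iff (n : ℕ) (hn : 3 ≤ n) (d : Fin n → ℤ) :
    (∃ c : Fin n → ℕ, d = ∑ i, ((c i : ℤ)) • alpha n i) ↔
      ((∀ t : ℕ, 0 ≤ Cf n t d) ∧ 2 ∣ Cf n n d) := by
  constructor
  · rintro ⟨c, rfl⟩
    constructor
    · intro t
      rw [Cf_sumsmul n t hn]
      split_ifs
      · positivity
      · exact Int.natCast_nonneg _
      · exact le_refl 0
    · rw [Cf_sumsmul n n hn, dif_pos (le_refl n)]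
      exact Dvd.intro _ rfl
  · rintro ⟨h1, h2⟩
    refine ⟨fun i => (czf n d i).toNat, ?_⟩
    conv_lhs => rw [reconstruct n hn d h2]
    refine Finset.sum_congr rfl fun i _ => ?_
    congr 1
    rw [Int.toNat_of_nonneg]
    unfold czf
    split_ifs
    · exact Int.ediv_nonneg (h1 n) (by norm_num)
    · exact h1 _

lemma radical_iff (n : ℕ) (hn : 3 ≤ n) (l : Fin n → ℤ) :
    radical n l ↔ 2 ∣ Cf n n l := by
  constructor
  · rintro ⟨c, rfl⟩
    rw [Cf_sumsmul n n hn, dif_pos (le_refl n)]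
    exact Dvd.intro _ rfl
  · intro h2
    exact ⟨czf n l, reconstruct n hn l h2⟩

lemma prec_iff (n : ℕ) (hn : 3 ≤ n) (μ l : Fin n → ℤ) :
    prec n μ l ↔
      μ ≠ l ∧ (∀ t : ℕ, Cf n t μ ≤ Cf n t l) ∧ 2 ∣ (Cf n n l - Cf n n μ) := by
  unfold prec
  refine and_congr_right fun _ => ?_
  have h1 : (∃ c : Fin n → ℕ, l = μ + ∑ i, ((c i : ℤ)) • alpha n i) ↔
      (∃ c : Fin n → ℕ, l - μ = ∑ i, ((c i : ℤ)) • alpha n i) :=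
    exists_congr fun c => sub_eq_iff_eq_add'.symm
  rw [h1, exists_c_iff n hn (l - μ)]
  have h3 : ∀ t, Cf n t (l - μ) = Cf n t l - Cf n t μ := fun t => Cf_sub n t l μ
  constructor
  · rintro ⟨ha, hb⟩
    refine ⟨fun t => by have := ha t; rw [h3 t] at this; omega, by rw [h3 n] at hb; exact hb⟩
  · rintro ⟨ha, hb⟩
    exact ⟨fun t => by rw [h3 t]; have := ha t; omega, by rw [h3 n]; exact hb⟩



lemma dom_zero (n : ℕ) : dominant n 0 := fun _ => le_refl 0

lemma dom_single (n : ℕ) (m : Fin n) (a : ℤ) (ha : 0 ≤ a) :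
    dominant n (Pi.single m a) := by
  intro k
  rw [Pi.single_apply]
  split_ifs
  · exact ha
  · exact le_refl 0

lemma single_ne_zero' (n : ℕ) (m : Fin n) (a : ℤ) (ha : a ≠ 0) : (Pi.single m a : Fin n → ℤ) ≠ 0 := by
  intro h
  have := congrFun h m
  rw [Pi.single_eq_same] at this
  exact ha (by simpa using this)

lemma single_eq_single (n : ℕ) (m k : Fin n) (a b : ℤ) (ha : a ≠ 0)
    (h : (Pi.single m a : Fin n → ℤ) = Pi.single k b) : m = k ∧ a = b := by
  rcases eq_or_ne m k with rfl | hne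
  · refine ⟨rfl, ?_⟩
    have := congrFun h m
    simpa using this
  · exfalso
    have := congrFun h m
    rw [Pi.single_eq_same, Pi.single_apply, if_neg hne] at this
    exact ha this

lemma Cf_top_single (n : ℕ) (m : Fin n) (a : ℤ) :
    Cf n n (Pi.single m a) = (((m:ℕ):ℤ)+1) * a := by
  rw [Cf_single]
  have h := m.isLt
  have : min ((n:ℕ):ℤ) (((m:ℕ):ℤ)+1) = ((m:ℕ):ℤ)+1 := by omega
  rw [this]

lemma Cf_pos (n t : ℕ) (ht : 1 ≤ t) (l : Fin n → ℤ) (hd : dominant n l) (hl : l ≠ 0) :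
    1 ≤ Cf n t l := by
  obtain ⟨m, hm⟩ := Function.ne_iff.mp hl
  simp only [Pi.zero_apply] at hm
  have hm1 : 1 ≤ l m := by have := hd m; omega
  have h := Cf_single_le n t l hd m
  have h1 : (1:ℤ) ≤ min (t:ℤ) (((m:ℕ):ℤ)+1) := by
    have : (0:ℤ) ≤ ((m:ℕ):ℤ) := Int.natCast_nonneg _
    omega
  nlinarith

lemma prec_of_le (n : ℕ) (hn : 3 ≤ n) (μ l : Fin n → ℤ) (hne : μ ≠ l)
    (hle : ∀ t : ℕ, Cf n t μ ≤ Cf n t l) (hpar : 2 ∣ (Cf n n l - Cf n n μ)) :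
    prec n μ l := (prec_iff n hn μ l).mpr ⟨hne, hle, hpar⟩


lemma cum_zero (n : ℕ) : cum n 0 = ∅ := rfl

lemma cum_succ (n i : ℕ) : cum n (i+1) = cum n i ∪ level n (i+1) := rfl

lemma Cf_single_nat (n t j : ℕ) (h : j < n) (a : ℤ) :
    Cf n t (Pi.single (⟨j, h⟩ : Fin n) a) = min (t:ℤ) ((j:ℤ)+1) * a := by
  rw [Cf_single]

lemma Cf_top_single_nat (n j : ℕ) (h : j < n) (a : ℤ) :
    Cf n n (Pi.single (⟨j, h⟩ : Fin n) a) = ((j:ℤ)+1) * a := by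
  rw [Cf_top_single]

lemma level_one (n : ℕ) (hn : 3 ≤ n) :
    level n 1 = {0, Pi.single (⟨0, Nat.lt_of_lt_of_le (by norm_num) hn⟩ : Fin n) (1 : ℤ)} := by
  have h03 : (0:ℕ) < n := by omega
  ext l
  simp only [level, Set.mem_setOf_eq, Set.mem_insert_iff, Set.mem_singleton_iff]
  constructor
  · rintro ⟨hd, -, hmin⟩
    by_contra hcon
    push_neg at hcon
    obtain ⟨hl0, hle0⟩ := hcon
    rcases Int.emod_two_eq (Cf n n l) with he | ho
    · have hp : prec n 0 l := prec_of_le n hn 0 l (Ne.symm hl0)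
        (fun t => by rw [Cf_zero]; exact Cf_nonneg n t l hd)
        (by rw [Cf_zero]; omega)
      have := hmin 0 (dom_zero n) hp
      rw [cum_zero] at this
      exact this
    · have hp : prec n (Pi.single (⟨0, h03⟩ : Fin n) (1:ℤ)) l := by
        refine prec_of_le n hn _ l (Ne.symm hle0) (fun t => ?_) ?_
        · rw [Cf_single_nat]
          rcases Nat.eq_zero_or_pos t with rfl | ht
          · rw [Cf_zero_t]; norm_num
          · have := Cf_pos n t ht l hd hl0
            have h0t : (1:ℤ) ≤ (t:ℤ) := by exact_mod_cast ht
            omega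
        · rw [Cf_top_single_nat]; omega
      have := hmin _ (dom_single n _ 1 (by norm_num)) hp
      rw [cum_zero] at this
      exact this
  · have hcompute : Cf n n (Pi.single (⟨0, h03⟩ : Fin n) (1:ℤ)) = 1 := by
      rw [Cf_top_single_nat]; norm_num
    rintro (rfl | rfl)
    · refine ⟨dom_zero n, by rw [cum_zero]; exact Set.notMem_empty _, fun ν hdν hp => ?_⟩
      obtain ⟨hne, hle, -⟩ := (prec_iff n hn ν 0).mp hp
      have h0 := hle n
      rw [Cf_zero] at h0
      exact absurd (eq_zero_of_Cf_top_nonpos n ν hdν h0) hne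
    · refine ⟨dom_single n _ 1 (by norm_num), by rw [cum_zero]; exact Set.notMem_empty _,
        fun ν hdν hp => ?_⟩
      exfalso
      obtain ⟨hne, hle, hpar⟩ := (prec_iff n hn ν _).mp hp
      have h1 := hle 1
      rw [Cf_single_nat] at h1
      have hsum : ∑ k, ν k ≤ 1 := by
        rw [← Cf_one]
        omega
      have htop := hle n
      rw [hcompute] at hpar htop
      rcases classify_one n ν hdν hsum with rfl | ⟨m, rfl⟩
      · rw [Cf_zero] at hpar
        omega
      · rw [Cf_top_single] at hpar htop
        have hm0 : (m:ℕ) = 0 := by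
          have : (0:ℤ) ≤ ((m:ℕ):ℤ) := Int.natCast_nonneg _
          omega
        have : m = (⟨0, h03⟩ : Fin n) := Fin.ext hm0
        rw [this] at hne
        exact hne rfl


lemma single_ne_single (n : ℕ) (j k : ℕ) (hj : j < n) (hk : k < n) (a b : ℤ)
    (ha : a ≠ 0) (hjk : j ≠ k) :
    (Pi.single (⟨j,hj⟩ : Fin n) a : Fin n → ℤ) ≠ Pi.single ⟨k,hk⟩ b := by
  intro h
  have h2 := (single_eq_single n _ _ _ _ ha h).1
  have h3 := congrArg Fin.val h2
  simp only [] at h3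
  exact hjk h3

lemma cum_one (n : ℕ) (hn : 3 ≤ n) :
    cum n 1 = {0, Pi.single (⟨0, Nat.lt_of_lt_of_le (by norm_num) hn⟩ : Fin n) (1 : ℤ)} := by
  rw [cum_succ, cum_zero, Set.empty_union, level_one n hn]

lemma Cf_top_two (n : ℕ) (hn : 3 ≤ n) (l : Fin n → ℤ) (hd : dominant n l) (hl0 : l ≠ 0)
    (hpar : Cf n n l % 2 = 0) : 2 ≤ Cf n n l := by
  have h0 := Cf_nonneg n n l hd
  have h1 : Cf n n l ≠ 0 := fun h => hl0 (eq_zero_of_Cf_top_nonpos n l hd (le_of_eq h))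
  omega

lemma Cf_top_three (n : ℕ) (hn : 3 ≤ n) (l : Fin n → ℤ) (hd : dominant n l) (hl0 : l ≠ 0)
    (hle0 : l ≠ Pi.single (⟨0, Nat.lt_of_lt_of_le (by norm_num) hn⟩ : Fin n) (1:ℤ))
    (hpar : Cf n n l % 2 = 1) : 3 ≤ Cf n n l := by
  have h0 := Cf_nonneg n n l hd
  have h1 : Cf n n l ≠ 1 := by
    intro h
    have hm : Cf n 1 l ≤ 1 := by
      have := Cf_mono n (show 1 ≤ n by omega) l hd
      omega
    rw [Cf_one] at hm
    rcases classify_one n l hd hm with rfl | ⟨m, rfl⟩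
    · exact hl0 rfl
    · have hc := Cf_top_single n m 1
      rw [hc] at h
      have hm0 : (m:ℕ) = 0 := by
        have : (0:ℤ) ≤ ((m:ℕ):ℤ) := Int.natCast_nonneg _
        omega
      exact hle0 (by rw [show m = (⟨0, by omega⟩ : Fin n) from Fin.ext hm0])
  omega

lemma level_two (n : ℕ) (hn : 3 ≤ n) :
    level n 2 = {Pi.single (⟨1, Nat.lt_of_lt_of_le (by norm_num) hn⟩ : Fin n) (1 : ℤ),
      Pi.single (⟨2, Nat.lt_of_lt_of_le (by norm_num) hn⟩ : Fin n) (1 : ℤ)} := by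
  have h0n : (0:ℕ) < n := by omega
  have h1n : (1:ℕ) < n := by omega
  have h2n : (2:ℕ) < n := by omega
  ext l
  simp only [level, Set.mem_setOf_eq, show (2-1 : ℕ) = 1 from rfl, cum_one n hn,
    Set.mem_insert_iff, Set.mem_singleton_iff]
  constructor
  · rintro ⟨hd, hnc, hmin⟩
    push_neg at hnc
    obtain ⟨hl0, hle0⟩ := hnc
    by_contra hcon
    push_neg at hcon
    obtain ⟨hle1, hle2⟩ := hcon
    rcases Int.emod_two_eq (Cf n n l) with he | ho
    · -- even : ω₂ ≺ l
      have h2 := Cf_top_two n hn l hd hl0 he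
      have hp : prec n (Pi.single (⟨1, h1n⟩ : Fin n) (1:ℤ)) l := by
        refine prec_of_le n hn _ l (Ne.symm hle1) (fun t => ?_) ?_
        · rw [Cf_single_nat]
          have := Cf_min_le n t l hd
          omega
        · rw [Cf_top_single_nat]; omega
      have hmem := hmin _ (dom_single n _ 1 (by norm_num)) hp
      rcases hmem with h | h
      · exact single_ne_zero' n _ 1 (by norm_num) h
      · exact single_ne_single n 1 0 h1n h0n 1 1 (by norm_num) (by omega) h
    · -- odd : ω₃ ≺ l
      have h3 := Cf_top_three n hn l hd hl0 hle0 ho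
      have hp : prec n (Pi.single (⟨2, h2n⟩ : Fin n) (1:ℤ)) l := by
        refine prec_of_le n hn _ l (Ne.symm hle2) (fun t => ?_) ?_
        · rw [Cf_single_nat]
          have := Cf_min_le n t l hd
          omega
        · rw [Cf_top_single_nat]; omega
      have hmem := hmin _ (dom_single n _ 1 (by norm_num)) hp
      rcases hmem with h | h
      · exact single_ne_zero' n _ 1 (by norm_num) h
      · exact single_ne_single n 2 0 h2n h0n 1 1 (by norm_num) (by omega) h
  · have hd1 : dominant n (Pi.single (⟨1, h1n⟩ : Fin n) (1:ℤ)) :=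
      dom_single n _ 1 (by norm_num)
    have hd2 : dominant n (Pi.single (⟨2, h2n⟩ : Fin n) (1:ℤ)) :=
      dom_single n _ 1 (by norm_num)
    rintro (rfl | rfl)
    · refine ⟨hd1, ?_, fun ν hdν hp => ?_⟩
      · push_neg
        exact ⟨single_ne_zero' n _ 1 (by norm_num),
          single_ne_single n 1 0 h1n h0n 1 1 (by norm_num) (by omega)⟩
      · obtain ⟨hne, hle, hpar⟩ := (prec_iff n hn ν _).mp hp
        have h1 := hle 1
        rw [Cf_single_nat] at h1
        have hsum : ∑ k, ν k ≤ 1 := by rw [← Cf_one]; omega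
        have htop := hle n
        rw [Cf_top_single_nat] at htop hpar
        rcases classify_one n ν hdν hsum with rfl | ⟨m, rfl⟩
        · exact Or.inl rfl
        · exfalso
          have hc := Cf_top_single n m 1
          rw [hc] at htop hpar
          have : (0:ℤ) ≤ ((m:ℕ):ℤ) := Int.natCast_nonneg _
          have hm1 : ((m:ℕ):ℤ) = 1 := by omega
          have : m = (⟨1, h1n⟩ : Fin n) := Fin.ext (by exact_mod_cast hm1)
          rw [this] at hne
          exact hne rfl
    · refine ⟨hd2, ?_, fun ν hdν hp => ?_⟩
      · push_neg
        exact ⟨single_ne_zero' n _ 1 (by norm_num),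
          single_ne_single n 2 0 h2n h0n 1 1 (by norm_num) (by omega)⟩
      · obtain ⟨hne, hle, hpar⟩ := (prec_iff n hn ν _).mp hp
        have h1 := hle 1
        rw [Cf_single_nat] at h1
        have hsum : ∑ k, ν k ≤ 1 := by rw [← Cf_one]; omega
        have htop := hle n
        rw [Cf_top_single_nat] at htop hpar
        rcases classify_one n ν hdν hsum with rfl | ⟨m, rfl⟩
        · exfalso
          rw [Cf_zero] at hpar
          omega
        · have hc := Cf_top_single n m 1
          rw [hc] at htop hpar
          have hnn : (0:ℤ) ≤ ((m:ℕ):ℤ) := Int.natCast_nonneg _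
          have hm02 : ((m:ℕ):ℤ) = 0 ∨ ((m:ℕ):ℤ) = 2 := by omega
          rcases hm02 with hm0 | hm2
          · refine Or.inr ?_
            rw [show m = (⟨0, h0n⟩ : Fin n) from Fin.ext (by exact_mod_cast hm0)]
          · exfalso
            rw [show m = (⟨2, h2n⟩ : Fin n) from Fin.ext (by exact_mod_cast hm2)] at hne
            exact hne rfl


lemma cum_two (n : ℕ) (hn : 3 ≤ n) :
    cum n 2 = {0, Pi.single (⟨0, Nat.lt_of_lt_of_le (by norm_num) hn⟩ : Fin n) (1 : ℤ),
      Pi.single (⟨1, Nat.lt_of_lt_of_le (by norm_num) hn⟩ : Fin n) (1 : ℤ),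
      Pi.single (⟨2, Nat.lt_of_lt_of_le (by norm_num) hn⟩ : Fin n) (1 : ℤ)} := by
  rw [cum_succ, cum_one n hn, level_two n hn]
  ext x
  simp only [Set.mem_union, Set.mem_insert_iff, Set.mem_singleton_iff]
  tauto

lemma single_notin_cum_two (n : ℕ) (hn : 3 ≤ n) (j : ℕ) (hj : j < n) (a : ℤ) (ha : a ≠ 0)
    (hc0 : ¬(j = 0 ∧ a = 1)) (hc1 : ¬(j = 1 ∧ a = 1)) (hc2 : ¬(j = 2 ∧ a = 1)) :
    (Pi.single (⟨j,hj⟩ : Fin n) a : Fin n → ℤ) ∉ cum n 2 := by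
  rw [cum_two n hn]
  intro h
  rcases h with h | h | h | h
  · exact single_ne_zero' n _ a ha h
  · obtain ⟨he, ha'⟩ := single_eq_single n _ _ _ _ ha h
    have hv := congrArg Fin.val he
    simp only [] at hv
    exact hc0 ⟨hv, ha'⟩
  · obtain ⟨he, ha'⟩ := single_eq_single n _ _ _ _ ha h
    have hv := congrArg Fin.val he
    simp only [] at hv
    exact hc1 ⟨hv, ha'⟩
  · obtain ⟨he, ha'⟩ := single_eq_single n _ _ _ _ ha h
    have hv := congrArg Fin.val he
    simp only [] at hv
    exact hc2 ⟨hv, ha'⟩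

lemma mem_level_three_2e0 (n : ℕ) (hn : 3 ≤ n) :
    (Pi.single (⟨0, Nat.lt_of_lt_of_le (by norm_num) hn⟩ : Fin n) (2:ℤ)) ∈ level n 3 ∧
      radical n (Pi.single (⟨0, Nat.lt_of_lt_of_le (by norm_num) hn⟩ : Fin n) (2:ℤ)) := by
  have h0n : (0:ℕ) < n := by omega
  have h1n : (1:ℕ) < n := by omega
  have hc : Cf n n (Pi.single (⟨0, h0n⟩ : Fin n) (2:ℤ)) = 2 := by
    rw [Cf_top_single_nat]; norm_num
  have hrad : radical n (Pi.single (⟨0, h0n⟩ : Fin n) (2:ℤ)) := by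
    rw [radical_iff n hn, hc]
  refine ⟨⟨dom_single n _ 2 (by norm_num), ?_, fun ν hdν hp => ?_⟩, hrad⟩
  · exact single_notin_cum_two n hn 0 h0n 2 (by norm_num) (by norm_num) (by norm_num)
      (by norm_num)
  · rw [show (3-1 : ℕ) = 2 from rfl, cum_two n hn]
    obtain ⟨hne, hle, hpar⟩ := (prec_iff n hn ν _).mp hp
    have h1 := hle 1
    rw [Cf_single_nat] at h1
    have hsum : ∑ k, ν k ≤ 2 := by rw [← Cf_one]; omega
    have htop := hle n
    rw [hc] at htop hpar
    rcases classify_two n ν hdν hsum with rfl | ⟨m, rfl⟩ | ⟨m, rfl⟩ | ⟨m, k, hmk, rfl⟩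
    · exact Or.inl rfl
    · have hcs := Cf_top_single n m 1
      rw [hcs] at htop hpar
      have hnn : (0:ℤ) ≤ ((m:ℕ):ℤ) := Int.natCast_nonneg _
      have hm1 : ((m:ℕ):ℤ) = 1 := by omega
      refine Or.inr (Or.inr (Or.inl ?_))
      rw [show m = (⟨1, h1n⟩ : Fin n) from Fin.ext (by exact_mod_cast hm1)]
    · exfalso
      have hcs := Cf_top_single n m 2
      rw [hcs] at htop
      have hnn : (0:ℤ) ≤ ((m:ℕ):ℤ) := Int.natCast_nonneg _
      have hm0 : ((m:ℕ):ℤ) = 0 := by omega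
      rw [show m = (⟨0, h0n⟩ : Fin n) from Fin.ext (by exact_mod_cast hm0)] at hne
      exact hne rfl
    · exfalso
      have hadd : Cf n n (Pi.single m (1:ℤ) + Pi.single k (1:ℤ)) =
          Cf n n (Pi.single m (1:ℤ)) + Cf n n (Pi.single k (1:ℤ)) := Cf_add n n _ _
      rw [hadd, Cf_top_single, Cf_top_single] at htop
      have hnm : (0:ℤ) ≤ ((m:ℕ):ℤ) := Int.natCast_nonneg _
      have hnk : (0:ℤ) ≤ ((k:ℕ):ℤ) := Int.natCast_nonneg _
      have hm0 : ((m:ℕ):ℤ) = 0 := by omega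
      have hk0 : ((k:ℕ):ℤ) = 0 := by omega
      have : m = k := Fin.ext (by omega)
      exact hmk this

lemma mem_level_three_e3 (n : ℕ) (h4 : 4 ≤ n) :
    (Pi.single (⟨3, Nat.lt_of_lt_of_le (by norm_num) h4⟩ : Fin n) (1:ℤ)) ∈ level n 3 ∧
      radical n (Pi.single (⟨3, Nat.lt_of_lt_of_le (by norm_num) h4⟩ : Fin n) (1:ℤ)) := by
  have hn : 3 ≤ n := by omega
  have h1n : (1:ℕ) < n := by omega
  have h3n : (3:ℕ) < n := by omega
  have hc : Cf n n (Pi.single (⟨3, h3n⟩ : Fin n) (1:ℤ)) = 4 := by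
    rw [Cf_top_single_nat]; norm_num
  have hrad : radical n (Pi.single (⟨3, h3n⟩ : Fin n) (1:ℤ)) := by
    rw [radical_iff n hn, hc]
    norm_num
  refine ⟨⟨dom_single n _ 1 (by norm_num), ?_, fun ν hdν hp => ?_⟩, hrad⟩
  · exact single_notin_cum_two n hn 3 h3n 1 (by norm_num) (by norm_num) (by norm_num)
      (by norm_num)
  · rw [show (3-1 : ℕ) = 2 from rfl, cum_two n hn]
    obtain ⟨hne, hle, hpar⟩ := (prec_iff n hn ν _).mp hp
    have h1 := hle 1
    rw [Cf_single_nat] at h1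
    have hsum : ∑ k, ν k ≤ 1 := by rw [← Cf_one]; omega
    have htop := hle n
    rw [hc] at htop hpar
    rcases classify_one n ν hdν hsum with rfl | ⟨m, rfl⟩
    · exact Or.inl rfl
    · have hcs := Cf_top_single n m 1
      rw [hcs] at htop hpar
      have hnn : (0:ℤ) ≤ ((m:ℕ):ℤ) := Int.natCast_nonneg _
      have hm13 : ((m:ℕ):ℤ) = 1 ∨ ((m:ℕ):ℤ) = 3 := by omega
      rcases hm13 with hm1 | hm3
      · refine Or.inr (Or.inr (Or.inl ?_))
        rw [show m = (⟨1, h1n⟩ : Fin n) from Fin.ext (by exact_mod_cast hm1)]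
      · exfalso
        rw [show m = (⟨3, h3n⟩ : Fin n) from Fin.ext (by exact_mod_cast hm3)] at hne
        exact hne rfl

lemma level_three_converse (n : ℕ) (hn : 3 ≤ n) (l : Fin n → ℤ)
    (hl : l ∈ level n 3) (hr : radical n l)
    (h2e0 : l ≠ Pi.single (⟨0, Nat.lt_of_lt_of_le (by norm_num) hn⟩ : Fin n) (2:ℤ)) :
    ∃ h4 : 4 ≤ n, l = Pi.single (⟨3, Nat.lt_of_lt_of_le (by norm_num) h4⟩ : Fin n) (1:ℤ) := by
  have h0n : (0:ℕ) < n := by omega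
  obtain ⟨hd, hnc, hmin⟩ := hl
  rw [show (3-1 : ℕ) = 2 from rfl] at hnc hmin
  rw [radical_iff n hn] at hr
  have hl0 : l ≠ 0 := by
    intro h
    exact hnc (by rw [cum_two n hn, h]; exact Or.inl rfl)
  have hle0 : l ≠ Pi.single (⟨0, h0n⟩ : Fin n) (1:ℤ) := by
    intro h
    exact hnc (by rw [cum_two n hn, h]; exact Or.inr (Or.inl rfl))
  have hle1 : l ≠ Pi.single (⟨1, by omega⟩ : Fin n) (1:ℤ) := by
    intro h
    exact hnc (by rw [cum_two n hn, h]; exact Or.inr (Or.inr (Or.inl rfl)))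
  by_cases hbig : 2 ≤ Cf n 1 l
  · -- 2ω₁ ≺ l, contradiction
    exfalso
    have h2 : 2 ≤ Cf n n l := Cf_top_two n hn l hd hl0 (by omega)
    have hp : prec n (Pi.single (⟨0, h0n⟩ : Fin n) (2:ℤ)) l := by
      refine prec_of_le n hn _ l (Ne.symm h2e0) (fun t => ?_) ?_
      · rw [Cf_single_nat]
        rcases Nat.eq_zero_or_pos t with rfl | ht1
        · rw [Cf_zero_t]; norm_num
        · rcases Nat.lt_or_ge t 2 with ht2 | ht2
          · have ht : t = 1 := by omega
            subst ht
            omega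
          · have := Cf_min_le n t l hd
            have : (2:ℤ) ≤ (t:ℤ) := by exact_mod_cast ht2
            omega
      · rw [Cf_top_single_nat]; omega
    have hmem := hmin _ (dom_single n _ 2 (by norm_num)) hp
    exact single_notin_cum_two n hn 0 h0n 2 (by norm_num) (by norm_num) (by norm_num)
      (by norm_num) hmem
  · -- l is a fundamental weight ω_{m+1}, m odd, m ≥ 3
    push_neg at hbig
    have hsum : ∑ k, l k ≤ 1 := by rw [← Cf_one]; omega
    rcases classify_one n l hd hsum with rfl | ⟨m, rfl⟩
    · exact absurd rfl hl0
    · have hcs := Cf_top_single n m 1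
      rw [hcs] at hr
      have hnn : (0:ℤ) ≤ ((m:ℕ):ℤ) := Int.natCast_nonneg _
      have hmodd : ((m:ℕ):ℤ) % 2 = 1 := by omega
      have hm1 : (m:ℕ) ≠ 1 := by
        intro h
        exact hle1 (by rw [show m = (⟨1, by omega⟩ : Fin n) from Fin.ext h])
      have hm3 : 3 ≤ (m:ℕ) := by
        have : (m:ℕ) % 2 = 1 := by omega
        omega
      have h4 : 4 ≤ n := by have := m.isLt; omega
      refine ⟨h4, ?_⟩
      by_contra hne3
      -- then m ≥ 5 and ω₄ ≺ l : contradiction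
      have h3n : (3:ℕ) < n := by omega
      have hm5 : 5 ≤ (m:ℕ) := by
        rcases Nat.lt_or_ge (m:ℕ) 5 with h | h
        · exfalso
          have : (m:ℕ) = 3 := by omega
          exact hne3 (by rw [show m = (⟨3, by omega⟩ : Fin n) from Fin.ext this])
        · exact h
      have hp : prec n (Pi.single (⟨3, h3n⟩ : Fin n) (1:ℤ)) (Pi.single m 1) := by
        refine prec_of_le n hn _ _ ?_ (fun t => ?_) ?_
        · intro h
          obtain ⟨he, -⟩ := single_eq_single n _ _ _ _ (by norm_num) h
          have hv := congrArg Fin.val he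
          simp only [] at hv
          omega
        · rw [Cf_single_nat, Cf_single]
          have : (5:ℤ) ≤ ((m:ℕ):ℤ) := by exact_mod_cast hm5
          omega
        · rw [hcs, Cf_top_single_nat]
          omega
      have hmem := hmin _ (dom_single n _ 1 (by norm_num)) hp
      exact single_notin_cum_two n hn 3 h3n 1 (by norm_num) (by norm_num) (by norm_num)
        (by norm_num) hmem

/-- **Lemma 5.2, row `C_n` (`n > 2`), and Lemma 5.2(2),(3).** In type `C_n` (`n ≥ 3`):
`Λ₁ = {0, ω_1}`, `Λ₂ = {ω_2, ω_3}`, and the set of radical weights in `Λ₃` is `{2ω_1}`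
for `n = 3` and `{2ω_1, ω_4}` for `n ≥ 4`. -/
theorem levels_Cn (n : ℕ) (hn : 3 ≤ n) :
    level n 1 = {0, Pi.single (⟨0, by omega⟩ : Fin n) (1 : ℤ)} ∧
    level n 2 =
      {Pi.single (⟨1, by omega⟩ : Fin n) (1 : ℤ),
       Pi.single (⟨2, by omega⟩ : Fin n) (1 : ℤ)} ∧
    (n = 3 →
      {l | l ∈ level n 3 ∧ radical n l} = {Pi.single (⟨0, by omega⟩ : Fin n) (2 : ℤ)}) ∧
    (∀ h4 : 4 ≤ n,
      {l | l ∈ level n 3 ∧ radical n l} =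
        {Pi.single (⟨0, by omega⟩ : Fin n) (2 : ℤ),
         Pi.single (⟨3, by omega⟩ : Fin n) (1 : ℤ)}) := by
  refine ⟨level_one n hn, level_two n hn, ?_, ?_⟩
  · intro h3
    ext l
    simp only [Set.mem_setOf_eq, Set.mem_singleton_iff]
    constructor
    · rintro ⟨hl, hr⟩
      by_contra hne
      obtain ⟨h4, -⟩ := level_three_converse n hn l hl hr hne
      omega
    · rintro rfl
      exact mem_level_three_2e0 n hn
  · intro h4
    ext l
    simp only [Set.mem_setOf_eq, Set.mem_insert_iff, Set.mem_singleton_iff]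
    constructor
    · rintro ⟨hl, hr⟩
      by_cases h : l = Pi.single (⟨0, by omega⟩ : Fin n) (2:ℤ)
      · exact Or.inl h
      · obtain ⟨h4x, he⟩ := level_three_converse n hn l hl hr h
        exact Or.inr he
    · rintro (rfl | rfl)
      · exact mem_level_three_2e0 n hn
      · exact mem_level_three_e3 n h4

end WeightLevelsCn
end

section
/- Let F be a field and a, b, c ∈ Fˣ with a²·b·c = 1, and assume it is not the case that b = a and c = a (so that s := diag(a, a, b, c) is a non-central element of SL_4(F)). If the induced linear endomorphism ⋀²s of the exterior square ⋀²(F⁴) has almost simple spectrum, i.e. at most one eigenvalue of ⋀²s has an eigenspace of dimension greater than 1, then b = c, b = a⁻¹ or b = −a⁻¹, and a⁴ ≠ 1. -/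
open ExteriorAlgebra

/-- The linear endomorphism of the `n`-th exterior power induced by a linear
endomorphism `f` of `M` (functoriality of the exterior power). -/
noncomputable def extPowMap {R M : Type*} [CommRing R] [AddCommGroup M] [Module R M]
    (n : ℕ) (f : M →ₗ[R] M) : ⋀[R]^n M →ₗ[R] ⋀[R]^n M :=
  (ExteriorAlgebra.map f).toLinearMap.restrict (p := ⋀[R]^n M) (q := ⋀[R]^n M)
    (fun x hx => by
      have hmono : ∀ S T : Submodule R (ExteriorAlgebra R M), S ≤ T →
          ∀ k : ℕ, S ^ k ≤ T ^ k := by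
        intro S T h k
        induction k with
        | zero => simp
        | succ k ih => rw [pow_succ, pow_succ]; exact mul_le_mul' ih h
      have key : Submodule.map (ExteriorAlgebra.map f).toLinearMap (⋀[R]^n M) ≤ ⋀[R]^n M := by
        rw [show (⋀[R]^n M) = (LinearMap.range (ι R : M →ₗ[R] ExteriorAlgebra R M)) ^ n from rfl,
          Submodule.map_pow, ExteriorAlgebra.ι_range_map_map]
        exact hmono _ _ (le_trans (Submodule.map_mono le_top)
          (by rw [Submodule.map_top])) n
      exact key (Submodule.mem_map_of_mem hx))

section Aux


variable {F : Type*} [Field F]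

/-- basis wedge element of ⋀² (F⁴) -/
noncomputable def wge (i j : Fin 4) : ⋀[F]^2 (Fin 4 → F) :=
  ⟨ExteriorAlgebra.ιMulti F 2 ![Pi.single i 1, Pi.single j 1],
    ExteriorAlgebra.ιMulti_range F 2 (Set.mem_range_self _)⟩

/-- coordinate functional on the exterior algebra -/
noncomputable def phiw (i j : Fin 4) : ExteriorAlgebra F (Fin 4 → F) →ₗ[F] F :=
  ExteriorAlgebra.liftAlternating (Function.update 0 2
    ((Matrix.detRowAlternating).compLinearMap (LinearMap.funLeft F F ![i, j])))

lemma phiw_wge (i j k l : Fin 4) :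
    phiw i j ((wge k l : ⋀[F]^2 (Fin 4 → F)) : ExteriorAlgebra F (Fin 4 → F)) =
      (Pi.single k 1 : Fin 4 → F) i * (Pi.single l 1 : Fin 4 → F) j -
        (Pi.single k 1 : Fin 4 → F) j * (Pi.single l 1 : Fin 4 → F) i := by
  show phiw i j (ExteriorAlgebra.ιMulti F 2 ![Pi.single k 1, Pi.single l 1]) = _
  rw [phiw, ExteriorAlgebra.liftAlternating_apply_ιMulti, Function.update_self]
  have : (Matrix.detRowAlternating.compLinearMap (LinearMap.funLeft F F ![i, j]))
      ![Pi.single k 1, Pi.single l 1] =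
      Matrix.det (Matrix.of fun r s =>
        (![(Pi.single k 1 : Fin 4 → F), Pi.single l 1] r) (![i, j] s)) := rfl
  rw [this, Matrix.det_fin_two]
  simp [Matrix.of_apply]

lemma toLin'_diagonal_single (d : Fin 4 → F) (k : Fin 4) :
    Matrix.toLin' (Matrix.diagonal d) (Pi.single k 1) = d k • (Pi.single k 1 : Fin 4 → F) := by
  rw [Matrix.toLin'_apply, Matrix.diagonal_mulVec_single]
  funext x
  simp [Pi.single_apply, mul_comm]

lemma extPow_wge (d : Fin 4 → F) (i j : Fin 4) :
    extPowMap 2 (Matrix.toLin' (Matrix.diagonal d)) (wge i j) = (d i * d j) • wge i j := by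
  apply Subtype.ext
  rw [extPowMap, LinearMap.restrict_coe_apply]
  show (ExteriorAlgebra.map (Matrix.toLin' (Matrix.diagonal d)))
      (ExteriorAlgebra.ιMulti F 2 ![Pi.single i 1, Pi.single j 1]) = _
  rw [ExteriorAlgebra.map_apply_ιMulti]
  have hc : (Matrix.toLin' (Matrix.diagonal d)) ∘ ![Pi.single i 1, Pi.single j 1]
      = fun r => (![d i, d j] r) • (![(Pi.single i 1 : Fin 4 → F), Pi.single j 1] r) := by
    funext r
    fin_cases r
    · exact toLin'_diagonal_single d i
    · exact toLin'_diagonal_single d j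
  rw [hc]
  have hms := MultilinearMap.map_smul_univ
    (ExteriorAlgebra.ιMulti F (M := Fin 4 → F) 2).toMultilinearMap
    ![d i, d j] ![Pi.single i 1, Pi.single j 1]
  simp only [AlternatingMap.coe_multilinearMap] at hms
  rw [hms, Fin.prod_univ_two]
  rfl

lemma li_pair {V : Type*} [AddCommGroup V] [Module F V] (x y : V) (φ ψ : V →ₗ[F] F)
    (h1 : φ x = 1) (h2 : φ y = 0) (h3 : ψ x = 0) (h4 : ψ y = 1) :
    LinearIndependent F ![x, y] := by
  rw [LinearIndependent.pair_iff]
  intro s t hst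
  constructor
  · have := congrArg φ hst
    simpa [h1, h2] using this
  · have := congrArg ψ hst
    simpa [h3, h4] using this

lemma aux_finrank {V : Type*} [AddCommGroup V] [Module F V] [FiniteDimensional F V]
    (p : Submodule F V) (x y : V) (hx : x ∈ p) (hy : y ∈ p)
    (h : LinearIndependent F ![x, y]) : 1 < Module.finrank F p := by
  have h2 : LinearIndependent F ![(⟨x, hx⟩ : p), ⟨y, hy⟩] := by
    apply LinearIndependent.of_comp p.subtype
    convert h using 1
    funext r
    fin_cases r <;> rfl
  have := h2.fintype_card_le_finrank
  exact (by simpa using this : 2 ≤ Module.finrank F p)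

noncomputable instance extPowFD : FiniteDimensional F (⋀[F]^2 (Fin 4 → F)) :=
  Module.Finite.iff_fg.mpr
    (Submodule.FG.pow (Module.Finite.iff_fg.mp inferInstance) 2)

end Aux

/-- **Lemma 6.2, case `ω = ω₂` (the key computation).** Let `a, b, c ∈ Fˣ` with
`a²bc = 1` and not both `b = a` and `c = a` (so `s = diag(a, a, b, c)` is a non-central
element of `SL₄(F)`). If the induced endomorphism `⋀²s` of `⋀²(F⁴)` has almost simple
spectrum (at most one eigenvalue with eigenspace of dimension greater than `1`), then
`b = c`, `b = a⁻¹` or `b = -a⁻¹`, and `a⁴ ≠ 1`. -/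
theorem extPow_sq_almost_simple_classification
    {F : Type*} [Field F] (a b c : Fˣ)
    (habc : a ^ 2 * b * c = 1)
    (hnc : ¬ (b = a ∧ c = a))
    (g : Module.End F (⋀[F]^2 (Fin 4 → F)))
    (hg : g = extPowMap 2
      (Matrix.toLin' (Matrix.diagonal ![(a : F), (a : F), (b : F), (c : F)])))
    (hAS : ∀ x y : F,
      1 < Module.finrank F (Module.End.eigenspace g x) →
      1 < Module.finrank F (Module.End.eigenspace g y) → x = y) :
    b = c ∧ (b = a⁻¹ ∨ b = -a⁻¹) ∧ a ^ 4 ≠ 1 := by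
  set d : Fin 4 → F := ![(a : F), (a : F), (b : F), (c : F)] with hd
  have d0 : d 0 = a := rfl
  have d1 : d 1 = a := rfl
  have d2 : d 2 = b := rfl
  have d3 : d 3 = c := rfl
  have hmem : ∀ i j : Fin 4, wge i j ∈ Module.End.eigenspace g (d i * d j) := by
    intro i j
    rw [Module.End.mem_eigenspace_iff, hg]
    exact extPow_wge d i j
  have key : ∀ i j k l : Fin 4, d i * d j = d k * d l →
      phiw i j ((wge i j : ⋀[F]^2 (Fin 4 → F)) : ExteriorAlgebra F (Fin 4 → F)) = 1 →
      phiw i j ((wge k l : ⋀[F]^2 (Fin 4 → F)) : ExteriorAlgebra F (Fin 4 → F)) = 0 →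
      phiw k l ((wge i j : ⋀[F]^2 (Fin 4 → F)) : ExteriorAlgebra F (Fin 4 → F)) = 0 →
      phiw k l ((wge k l : ⋀[F]^2 (Fin 4 → F)) : ExteriorAlgebra F (Fin 4 → F)) = 1 →
      1 < Module.finrank F (Module.End.eigenspace g (d i * d j)) := by
    intro i j k l he p1 p2 p3 p4
    refine aux_finrank _ (wge i j) (wge k l) (hmem i j) ?_ ?_
    · rw [he]; exact hmem k l
    · exact li_pair _ _ ((phiw i j).comp (Submodule.subtype _))
        ((phiw k l).comp (Submodule.subtype _)) p1 p2 p3 p4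
  have eab : 1 < Module.finrank F (Module.End.eigenspace g ((a : F) * b)) := by
    exact key 0 2 1 2 rfl
      (by simp [phiw_wge, Pi.single_apply]) (by simp [phiw_wge, Pi.single_apply])
      (by simp [phiw_wge, Pi.single_apply]) (by simp [phiw_wge, Pi.single_apply])
  have eac : 1 < Module.finrank F (Module.End.eigenspace g ((a : F) * c)) := by
    exact key 0 3 1 3 rfl
      (by simp [phiw_wge, Pi.single_apply]) (by simp [phiw_wge, Pi.single_apply])
      (by simp [phiw_wge, Pi.single_apply]) (by simp [phiw_wge, Pi.single_apply])
  have hbcF : (a : F) * b = (a : F) * c := hAS _ _ eab eac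
  have hbc : (b : F) = (c : F) := mul_left_cancel₀ (Units.ne_zero a) hbcF
  have hbcu : b = c := Units.ext hbc
  have habcF : (a : F) ^ 2 * b * c = 1 := by
    have h := congrArg (Units.val) habc
    push_cast at h
    exact h
  have hab2 : ((a : F) * b) ^ 2 = 1 := by
    have h : ((a : F) * b) ^ 2 = (a : F) ^ 2 * b * c := by rw [← hbc]; ring
    rw [h, habcF]
  have hpm : (a : F) * b = 1 ∨ (a : F) * b = -1 := by
    have hz : ((a : F) * b - 1) * ((a : F) * b + 1) = 0 := by linear_combination hab2
    rcases mul_eq_zero.mp hz with h | h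
    · exact Or.inl (sub_eq_zero.mp h)
    · exact Or.inr (eq_neg_of_add_eq_zero_left h)
  have hbinv : b = a⁻¹ ∨ b = -a⁻¹ := by
    rcases hpm with h | h
    · left
      apply Units.ext
      rw [Units.val_inv_eq_inv_val]
      field_simp
      linear_combination h
    · right
      apply Units.ext
      rw [Units.val_neg, Units.val_inv_eq_inv_val]
      field_simp
      linear_combination h
  refine ⟨hbcu, hbinv, ?_⟩
  intro h4
  have h4F : (a : F) ^ 4 = 1 := by
    have h := congrArg (Units.val) h4
    push_cast at h
    exact h
  have he' : d 0 * d 1 = d 2 * d 3 := by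
    rw [d0, d1, d2, d3, ← hbc]
    have hz : ((a : F) ^ 2) * ((a : F) * (a : F) - (b : F) * (b : F)) = 0 := by
      linear_combination h4F - hab2
    have h := (mul_eq_zero.mp hz).resolve_left (pow_ne_zero 2 (Units.ne_zero a))
    exact sub_eq_zero.mp h
  have eaa : 1 < Module.finrank F (Module.End.eigenspace g ((a : F) * (a : F))) := by
    exact key 0 1 2 3 he'
      (by simp [phiw_wge, Pi.single_apply]) (by simp [phiw_wge, Pi.single_apply])
      (by simp [phiw_wge, Pi.single_apply]) (by simp [phiw_wge, Pi.single_apply])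
  have haab : (a : F) * (a : F) = (a : F) * (b : F) := hAS _ _ eaa eab
  have hba : (a : F) = (b : F) := mul_left_cancel₀ (Units.ne_zero a) haab
  exact hnc ⟨Units.ext hba.symm, hbcu ▸ Units.ext hba.symm⟩
end

section
/- Let k be a field of characteristic zero and let P be a reduced, crystallographic, irreducible root pairing with root index set ι, roots P.root i lying in a k-vector space M (in Mathlib terms, P : RootPairing ι k M N with P.IsCrystallographic, P.IsReduced and irreducible). Let F be a field and f : M → Fˣ an additive-to-multiplicative character (an AddChar from (M, +) to Fˣ). Suppose f takes the value 1 on some root and a value different from 1 on some root. Then there exist indices i, j with P.root i ≠ P.root j such that f(P.root i) = f(P.root j) and f(P.root i) ≠ 1. -/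
/-- A root pairing is irreducible if its set of roots cannot be partitioned into two
nonempty mutually orthogonal subsets (orthogonality of roots being expressed by the
vanishing of the corresponding pairings). -/
def RootPairing.IsIrred {ι R M N : Type*} [CommRing R] [AddCommGroup M] [Module R M]
    [AddCommGroup N] [Module R N] (P : RootPairing ι R M N) : Prop :=
  ¬ ∃ S : Set ι, S.Nonempty ∧ Sᶜ.Nonempty ∧
      ∀ i ∈ S, ∀ j ∈ Sᶜ, P.pairing i j = 0 ∧ P.pairing j i = 0

/-- If `⟨αⱼ, αᵢ∨⟩ = 0` then `⟨αᵢ, αⱼ∨⟩ = 0` (in characteristic zero). -/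
lemma pairing_symm_zero_aux
    {ι k M N : Type*} [Field k] [CharZero k]
    [AddCommGroup M] [Module k M] [AddCommGroup N] [Module k N]
    (P : RootPairing ι k M N) {i j : ι} (h : P.pairing j i = 0) :
    P.pairing i j = 0 := by
  have hr : P.root (P.reflectionPerm i j) = P.root j := by
    rw [P.root_reflectionPerm, P.reflection_apply_root, h, zero_smul, sub_zero]
  have hfix : P.reflectionPerm i j = j := P.root.injective hr
  have hc := P.reflectionPerm_coroot i j
  rw [hfix] at hc
  have : P.pairing i j • P.coroot i = 0 := by
    rw [P.root_coroot_eq_pairing] at hc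
    linear_combination (norm := module) -hc
  rcases smul_eq_zero.mp this with h0 | h0
  · exact h0
  · exact absurd h0 (P.ne_zero' i)

/-- **Key step in the proof of Lemma 6.6 (case `ω = ω₂`).** Let `P` be a reduced,
crystallographic, irreducible root pairing over a field `k` of characteristic zero, and
let `f` be a multiplicative character of the additive group of the ambient space of the
roots, with values in `Fˣ` for a field `F`. If `f` takes the value `1` on some root and
a value different from `1` on some root, then there are two distinct roots on which `f`
takes equal values different from `1`. -/
theorem exists_distinct_roots_eq_values_ne_one
    {ι k M N : Type*} [Field k] [CharZero k]
    [AddCommGroup M] [Module k M] [AddCommGroup N] [Module k N]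
    (P : RootPairing ι k M N)
    (hcr : P.IsCrystallographic) (hred : P.IsReduced) (hirr : P.IsIrred)
    {F : Type*} [Field F] (f : AddChar M Fˣ)
    (h1 : ∃ i, f (P.root i) = 1) (h2 : ∃ j, f (P.root j) ≠ 1) :
    ∃ i j, P.root i ≠ P.root j ∧ f (P.root i) = f (P.root j) ∧ f (P.root i) ≠ 1 := by
  classical
  obtain ⟨i₀, hi₀⟩ := h1
  obtain ⟨j₀, hj₀⟩ := h2
  set S : Set ι := {i | f (P.root i) = 1} with hS
  have hSne : S.Nonempty := ⟨i₀, hi₀⟩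
  have hScne : Sᶜ.Nonempty := ⟨j₀, hj₀⟩
  rw [RootPairing.IsIrred] at hirr
  push_neg at hirr
  obtain ⟨i, hi, j, hj, hpair⟩ := hirr S hSne hScne
  have hji : P.pairing j i ≠ 0 := by
    intro h0
    exact hpair (pairing_symm_zero_aux P h0) h0
  -- the reflection of root j in root i
  obtain ⟨n, hn⟩ := hcr.exists_value j i
  rw [algebraMap_int_eq, eq_intCast] at hn
  have hn0 : n ≠ 0 := by
    rintro rfl
    exact hji (by simpa using hn.symm)
  refine ⟨P.reflectionPerm i j, j, ?_, ?_, ?_⟩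
  · rw [P.root_reflectionPerm, P.reflection_apply_root]
    intro hEq
    have : P.pairing j i • P.root i = 0 := by
      have := sub_eq_self.mp hEq
      simpa using this
    rcases smul_eq_zero.mp this with h0 | h0
    · exact hji h0
    · exact P.ne_zero i h0
  · rw [P.root_reflectionPerm, P.reflection_apply_root, AddChar.map_sub_eq_div]
    have : P.pairing j i • P.root i = n • P.root i := by
      rw [← hn, Int.cast_smul_eq_zsmul]
    rw [this, AddChar.map_zsmul_eq_zpow, hi, one_zpow, div_one]
  · rw [P.root_reflectionPerm, P.reflection_apply_root, AddChar.map_sub_eq_div]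
    have : P.pairing j i • P.root i = n • P.root i := by
      rw [← hn, Int.cast_smul_eq_zsmul]
    rw [this, AddChar.map_zsmul_eq_zpow, hi, one_zpow, div_one]
    exact hj
end
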